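/- In a characteristic φ-Šerstnev PN space (V, ν, τ, τ*) with lim_{x→∞} φ̂(x) = ∞, a subset A is topologically bounded if and only if for every n ∈ ℕ there exists k ∈ ℕ such that A ⊆ k·N_0(1/n), where N_0(λ) is the strong λ-neighborhood of the origin. -/

import Mathlib

open Filter Pointwise

/-- A φ-Šerstnev probabilistic normed space on a real vector space `V`.
`nu p` is the distribution function of `p` (as a function ℝ → [0,1], vanishing on
(-∞,0]), `tau` is the triangle function, `phi` the generating function in M̃ and
`phihat` its left-continuous quasi-inverse. -/
structure GSerstnev (V : Type*) [AddCommGroup V] [Module ℝ V] where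
  nu : V → ℝ → ℝ
  tau : (ℝ → ℝ) → (ℝ → ℝ) → (ℝ → ℝ)
  phi : ℝ → ℝ
  phihat : ℝ → ℝ
  mono : ∀ p, Monotone (nu p)
  mem01 : ∀ p x, nu p x ∈ Set.Icc (0:ℝ) 1
  zero_of_nonpos : ∀ p x, x ≤ 0 → nu p x = 0
  eps0 : ∀ x > (0:ℝ), nu 0 x = 1
  eq_zero : ∀ p : V, (∀ x > (0:ℝ), nu p x = 1) → p = 0
  neg : ∀ p : V, nu (-p) = nu p
  tri : ∀ p q x, tau (nu p) (nu q) x ≤ nu (p + q) x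
  phi_mono : Monotone phi
  phi_zero : phi 0 = 0
  phi_pos : ∀ x > (0:ℝ), 0 < phi x
  phihat_mono : Monotone phihat
  quasi1 : ∀ x ≥ (0:ℝ), phihat (phi x) ≤ x
  quasi2 : ∀ y ≥ (0:ℝ), phi (phihat y) ≤ y
  serstnev : ∀ (l : ℝ), l ≠ 0 → ∀ (p : V) (x : ℝ), 0 ≤ x →
    nu (l • p) x = nu p (phihat (phi x / |l|))

/-- Strong convergence of a sequence in a φ-Šerstnev PN space. -/
def SConv {V : Type*} [AddCommGroup V] [Module ℝ V] (G : GSerstnev V)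
    (s : ℕ → V) (p : V) : Prop :=
  ∀ l : ℝ, 0 < l → ∃ N : ℕ, ∀ m ≥ N, G.nu (s m - p) l > 1 - l

/-- in a characteristic φ-Šerstnev PN space with φ̂(x) → ∞, a set A
is topologically bounded iff for every n there is k ∈ ℕ with A ⊆ k·N₀(1/n), where
N₀(λ) = {q : ν_q(λ) > 1 - λ}. -/
theorem stmt15 {V : Type*} [AddCommGroup V] [Module ℝ V] (G : GSerstnev V)
    (hchar : ∀ p : V, Tendsto (G.nu p) atTop (nhds 1))
    (hphihat : Tendsto G.phihat atTop atTop)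
    (A : Set V) :
    (∀ (α : ℕ → ℝ) (s : ℕ → V), Tendsto α atTop (nhds 0) → (∀ n, s n ∈ A) →
        SConv G (fun m => α m • s m) 0)
      ↔ ∀ n : ℕ, 0 < n → ∃ k : ℕ,
          A ⊆ (k : ℝ) • {q : V | G.nu q (1 / (n : ℝ)) > 1 - 1 / (n : ℝ)} := by
  constructor
  · -- forward direction
    intro h n hn
    by_contra hcon
    push_neg at hcon
    have hex : ∀ k : ℕ, ∃ p ∈ A,
        p ∉ (k : ℝ) • {q : V | G.nu q (1 / (n : ℝ)) > 1 - 1 / (n : ℝ)} := by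
      intro k
      have := hcon k
      rw [Set.not_subset] at this
      exact this
    choose s hsA hsN using hex
    set α : ℕ → ℝ := fun m => 1 / ((m : ℝ) + 1) with hαdef
    have hα : Tendsto α atTop (nhds 0) := tendsto_one_div_add_atTop_nhds_zero_nat
    have hconv := h α (fun m => s (m + 1)) hα (fun m => hsA (m + 1))
    have hln : (0 : ℝ) < 1 / (n : ℝ) := by positivity
    obtain ⟨N, hN⟩ := hconv (1 / (n : ℝ)) hln
    have hmem : G.nu (α N • s (N + 1)) (1 / (n : ℝ)) > 1 - 1 / (n : ℝ) := by
      have := hN N le_rfl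
      simpa using this
    apply hsN (N + 1)
    refine ⟨α N • s (N + 1), hmem, ?_⟩
    have hNe : ((N : ℝ) + 1) ≠ 0 := by positivity
    show ((N + 1 : ℕ) : ℝ) • (α N • s (N + 1)) = s (N + 1)
    rw [smul_smul]
    have h1 : ((N + 1 : ℕ) : ℝ) * α N = 1 := by
      rw [hαdef]; push_cast; rw [mul_one_div, div_self hNe]
    rw [h1, one_smul]
  · -- backward direction
    intro h α s hα hs l hl
    obtain ⟨n, hn⟩ := exists_nat_one_div_lt hl
    have hnn : (0 : ℝ) < 1 / ((n : ℝ) + 1) := by positivity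
    have hnl : 1 / ((n : ℝ) + 1) ≤ l := le_of_lt hn
    obtain ⟨k, hk⟩ := h (n + 1) (Nat.succ_pos n)
    have hcast : ((n + 1 : ℕ) : ℝ) = (n : ℝ) + 1 := by push_cast; ring
    rw [hcast] at hk
    rcases Nat.eq_zero_or_pos k with hk0 | hkpos
    · -- k = 0 : A ⊆ {0}
      refine ⟨0, fun m _ => ?_⟩
      obtain ⟨q, _, hq0⟩ := hk (hs m)
      rw [hk0] at hq0
      simp only [Nat.cast_zero, zero_smul] at hq0
      have : α m • s m = 0 := by rw [← hq0, smul_zero]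
      simp only [this, sub_zero, G.eps0 l hl]
      linarith
    · have hP : 0 < G.phi (1 / ((n : ℝ) + 1)) := G.phi_pos _ hnn
      set P := G.phi (1 / ((n : ℝ) + 1)) with hPdef
      obtain ⟨M, hM⟩ := eventually_atTop.mp
        (hphihat.eventually (eventually_ge_atTop (1 / ((n : ℝ) + 1))))
      set E := max M 1 with hEdef
      have hE : 0 < E := lt_of_lt_of_le one_pos (le_max_right _ _)
      have hkR : (0 : ℝ) < (k : ℝ) := by exact_mod_cast hkpos
      have hD : 0 < P / (E * (k : ℝ)) := by positivity
      obtain ⟨N, hN⟩ := Metric.tendsto_atTop.mp hα (P / (E * (k : ℝ))) hD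
      refine ⟨N, fun m hm => ?_⟩
      obtain ⟨q, hqN, hqs⟩ := hk (hs m)
      have hqN' : G.nu q (1 / ((n : ℝ) + 1)) > 1 - 1 / ((n : ℝ) + 1) := hqN
      have hsmul : α m • s m = (α m * (k : ℝ)) • q := by
        rw [← hqs, smul_smul]
      set c := α m * (k : ℝ) with hcdef
      rcases eq_or_ne c 0 with hc0 | hc
      · have : α m • s m = 0 := by rw [hsmul, hc0, zero_smul]
        simp only [this, sub_zero, G.eps0 l hl]
        linarith
      · have hαm : |α m| < P / (E * (k : ℝ)) := by
          have := hN m hm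
          rwa [Real.dist_eq, sub_zero] at this
        have hcabs : |c| < P / E := by
          rw [hcdef, abs_mul, abs_of_nonneg (le_of_lt hkR)]
          calc |α m| * (k : ℝ) < P / (E * (k : ℝ)) * (k : ℝ) := by
                exact mul_lt_mul_of_pos_right hαm hkR
            _ = P / E := by field_simp
        have hcpos : 0 < |c| := abs_pos.mpr hc
        have hPcE : E < P / |c| := by
          rw [lt_div_iff₀ hcpos]
          calc E * |c| < E * (P / E) := by exact mul_lt_mul_of_pos_left hcabs hE
            _ = P := by field_simp
        have hPcM : M ≤ P / |c| :=
          le_of_lt (lt_of_le_of_lt (le_max_left _ _) hPcE)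
        have hph : 1 / ((n : ℝ) + 1) ≤ G.phihat (P / |c|) := hM _ hPcM
        have hser := G.serstnev c hc q (1 / ((n : ℝ) + 1)) (le_of_lt hnn)
        have key : G.nu (c • q) (1 / ((n : ℝ) + 1)) > 1 - 1 / ((n : ℝ) + 1) := by
          rw [hser, ← hPdef]
          exact lt_of_lt_of_le hqN' (G.mono q hph)
        have hmono : G.nu (c • q) (1 / ((n : ℝ) + 1)) ≤ G.nu (c • q) l :=
          G.mono _ hnl
        simp only [sub_zero, hsmul, ← hcdef]
        calc 1 - l ≤ 1 - 1 / ((n : ℝ) + 1) := by linarith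
          _ < G.nu (c • q) (1 / ((n : ℝ) + 1)) := key
          _ ≤ G.nu (c • q) l := hmono
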